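/- Let (g,[.,.]) be a Leibniz algebra over a field K, T a Rota-Baxter operator on g, and (V, l, r, T_V) a representation of the Rota-Baxter Leibniz algebra (g,[.,.],T). Let ∂^n denote the Loday–Pirashvili coboundary of the induced Leibniz algebra (g,[.,.]_*) with coefficients in the induced representation (V,l',r'). Then ∂^{n+1} ∘ ∂^n = 0 for all n ≥ 0; that is, (Hom(g^{⊗n},V), ∂^n) is a cochain complex. -/

import Mathlib

/-- A bilinear map between modules over a field `K`, expressed as a predicate
on a curried two-argument function. -/
def Bilin (K : Type*) [Field K] {A B C : Type*} [AddCommGroup A] [Module K A]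
    [AddCommGroup B] [Module K B] [AddCommGroup C] [Module K C]
    (f : A → B → C) : Prop :=
  (∀ a a' b, f (a + a') b = f a b + f a' b) ∧
  (∀ (c : K) (a : A) (b : B), f (c • a) b = c • f a b) ∧
  (∀ a b b', f a (b + b') = f a b + f a b') ∧
  (∀ (c : K) (a : A) (b : B), f a (c • b) = c • f a b)

/-- The (left) Leibniz identity for a bracket. -/
def IsLeibnizBracket {g : Type*} [AddCommGroup g] (br : g → g → g) : Prop :=
  ∀ x y z, br x (br y z) = br (br x y) z + br y (br x z)


/-- A representation of a Leibniz algebra `(g, br)` on `V`, given by left and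
right actions `l : g → V → V` and `r : V → g → V`. -/
def IsLeibnizRep {g V : Type*} [AddCommGroup g] [AddCommGroup V]
    (br : g → g → g) (l : g → V → V) (r : V → g → V) : Prop :=
  (∀ x y u, l x (l y u) = l (br x y) u + l y (l x u)) ∧
  (∀ x y u, l x (r u y) = r (l x u) y + r u (br x y)) ∧
  (∀ x y u, r u (br x y) = r (r u x) y + l x (r u y))

/-- A representation of a Rota-Baxter Leibniz algebra `(g, br, T)` on
`(V, l, r, TV)`. -/
def IsRBRep {g V : Type*} [AddCommGroup g] [AddCommGroup V]
    (br : g → g → g) (T : g → g) (l : g → V → V) (r : V → g → V)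
    (TV : V → V) : Prop :=
  IsLeibnizRep br l r ∧
  (∀ x u, l (T x) (TV u) = TV (l (T x) u + l x (TV u))) ∧
  (∀ x u, r (TV u) (T x) = TV (r (TV u) x + r u (T x)))

/-- The Loday–Pirashvili coboundary of a Leibniz algebra `(g, br)` with
coefficients in a representation `(V, l, r)`, on `n`-cochains
`f : g^n → V` (indices are `0`-based, corresponding to `x_1, …, x_{n+1}` in
the classical `1`-based notation). -/
def lpCoboundary {g V : Type*} [AddCommGroup g] [AddCommGroup V]
    (br : g → g → g) (l : g → V → V) (r : V → g → V) (n : ℕ)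
    (f : (Fin n → g) → V) : (Fin (n + 1) → g) → V :=
  fun x =>
    (∑ i : Fin n, ((-1 : ℤ) ^ (i : ℕ)) •
        l (x i.castSucc) (f fun k => x (i.castSucc.succAbove k)))
      + ((-1 : ℤ) ^ (n + 1)) • r (f fun k => x k.castSucc) (x (Fin.last n))
      + ∑ i : Fin (n + 1), ∑ j : Fin n,
          if (i : ℕ) ≤ (j : ℕ) then
            ((-1 : ℤ) ^ ((i : ℕ) + 1)) •
              f (Function.update (fun k => x (i.succAbove k)) j
                  (br (x i) (x j.succ)))
          else 0

/-- The map `φ^n : Hom(g^{⊗n}, V) → Hom(g^{⊗n}, V)` given by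
`φ^n(f)(x_1,…,x_n) = f(Tx_1,…,Tx_n)
  - Σ_i T_V (f (Tx_1,…,Tx_{i-1}, x_i, Tx_{i+1},…,Tx_n))`. -/
def phiMap {g V : Type*} [AddCommGroup V] (T : g → g) (TV : V → V) (n : ℕ)
    (f : (Fin n → g) → V) : (Fin n → g) → V :=
  fun x =>
    f (fun k => T (x k))
      - ∑ i : Fin n, TV (f (Function.update (fun k => T (x k)) i (x i)))

namespace LP

variable {g : Type*} [AddCommGroup g] {V : Type*} [AddCommGroup V]

lemma snoc_comp_succAbove {m : ℕ} (y : Fin (m+1) → g) (z : g) (p : Fin (m+1)) :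
    (fun k : Fin (m+1) => Fin.snoc (α := fun _ => g) y z (p.castSucc.succAbove k))
      = Fin.snoc (α := fun _ => g) (fun k : Fin m => y (p.succAbove k)) z := by
  funext k
  refine Fin.lastCases (motive := fun k => Fin.snoc (α := fun _ => g) y z (p.castSucc.succAbove k)
      = Fin.snoc (α := fun _ => g) (fun k : Fin m => y (p.succAbove k)) z k) ?_ (fun j => ?_) k
  ·
      have h1 : p.castSucc.succAbove (Fin.last m) = Fin.last (m+1) := by
        rw [Fin.succAbove_of_le_castSucc _ _ (by simpa using p.le_last), Fin.succ_last]
      simp [h1]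
  · have h1 : p.castSucc.succAbove j.castSucc = (p.succAbove j).castSucc :=
      Fin.castSucc_succAbove_castSucc
    simp [h1]

lemma snoc_cast_self {m : ℕ} (y : Fin (m+1) → g) :
    Fin.snoc (fun k : Fin m => y k.castSucc) (y (Fin.last m)) = y :=
  Fin.snoc_init_self y

/-- evaluation at a point as an additive hom -/
def evalAt (z : g) : (g →+ V) →+ V :=
  { toFun := fun φ => φ z, map_zero' := rfl, map_add' := fun _ _ => rfl }

namespace Star

variable {m : ℕ} (br : g → g → g) (l : g → V → V) (r : V → g → V)
variable (f : (Fin (m+1) → g) → V) (y : Fin (m+1) → g) (z : g)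

theorem e1 :
    (∑ i : Fin (m+1), ((-1:ℤ)^(i:ℕ)) •
        l (Fin.snoc (α := fun _ => g) y z i.castSucc) (f fun k => Fin.snoc (α := fun _ => g) y z (i.castSucc.succAbove k)))
    = (∑ i : Fin m, ((-1:ℤ)^(i:ℕ)) •
          l (y i.castSucc) (f (Fin.snoc (fun k => y (i.castSucc.succAbove k)) z)))
      + ((-1:ℤ)^m) • l (y (Fin.last m)) (f (Fin.snoc (fun k => y k.castSucc) z)) := by
  rw [Fin.sum_univ_castSucc]
  congr 1
  · refine Finset.sum_congr rfl (fun i _ => ?_)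
    rw [snoc_comp_succAbove]
    simp
  · rw [snoc_comp_succAbove]
    simp

theorem e2 :
    ((-1:ℤ)^(m+1+1)) • r (f fun k => Fin.snoc (α := fun _ => g) y z k.castSucc) (Fin.snoc (α := fun _ => g) y z (Fin.last (m+1)))
    = ((-1:ℤ)^m) • r (f y) z := by
  have h1 : (fun k : Fin (m+1) => Fin.snoc (α := fun _ => g) y z k.castSucc) = y := by
    funext k; simp
  rw [h1, Fin.snoc_last, show ((-1:ℤ))^(m+1+1) = (-1:ℤ)^m from by ring]

theorem e3 :
    (∑ i : Fin (m+2), ∑ j : Fin (m+1),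
        if (i : ℕ) ≤ (j : ℕ) then
          ((-1 : ℤ) ^ ((i : ℕ) + 1)) •
            f (Function.update (fun k => Fin.snoc (α := fun _ => g) y z (i.succAbove k)) j
                (br (Fin.snoc (α := fun _ => g) y z i) (Fin.snoc (α := fun _ => g) y z j.succ)))
        else 0)
    = (∑ i : Fin (m+1), ∑ j : Fin m,
        if (i : ℕ) ≤ (j : ℕ) then
          ((-1 : ℤ) ^ ((i : ℕ) + 1)) •
            f (Fin.snoc (Function.update (fun k => y (i.succAbove k)) j
                (br (y i) (y j.succ))) z)
        else 0)
      + ((∑ i : Fin m, ((-1:ℤ)^((i:ℕ)+1)) •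
            f (Fin.snoc (fun k => y (i.castSucc.succAbove k)) (br (y i.castSucc) z)))
          + ((-1:ℤ)^(m+1)) •
              f (Fin.snoc (fun k => y k.castSucc) (br (y (Fin.last m)) z))) := by
  rw [Fin.sum_univ_castSucc]
  have hlast : (∑ j : Fin (m+1),
      if ((Fin.last (m+1) : Fin (m+2)) : ℕ) ≤ (j : ℕ) then
        ((-1 : ℤ) ^ (((Fin.last (m+1) : Fin (m+2)) : ℕ) + 1)) •
          f (Function.update (fun k => Fin.snoc (α := fun _ => g) y z ((Fin.last (m+1)).succAbove k)) j
              (br (Fin.snoc (α := fun _ => g) y z (Fin.last (m+1))) (Fin.snoc (α := fun _ => g) y z j.succ)))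
      else 0) = 0 := by
    refine Finset.sum_eq_zero (fun j _ => ?_)
    rw [if_neg]
    have := j.is_lt
    simp only [Fin.val_last]
    omega
  rw [hlast, add_zero]
  have hmain : ∀ i₀ : Fin (m+1),
      (∑ j : Fin (m+1),
        if ((i₀.castSucc : Fin (m+2)) : ℕ) ≤ (j : ℕ) then
          ((-1 : ℤ) ^ (((i₀.castSucc : Fin (m+2)) : ℕ) + 1)) •
            f (Function.update (fun k => Fin.snoc (α := fun _ => g) y z (i₀.castSucc.succAbove k)) j
                (br (Fin.snoc (α := fun _ => g) y z i₀.castSucc) (Fin.snoc (α := fun _ => g) y z j.succ)))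
        else 0)
      = (∑ j : Fin m,
          if (i₀ : ℕ) ≤ (j : ℕ) then
            ((-1 : ℤ) ^ ((i₀ : ℕ) + 1)) •
              f (Fin.snoc (Function.update (fun k => y (i₀.succAbove k)) j
                  (br (y i₀) (y j.succ))) z)
          else 0)
        + ((-1:ℤ)^((i₀:ℕ)+1)) •
            f (Fin.snoc (fun k => y (i₀.succAbove k)) (br (y i₀) z)) := by
    intro i₀
    rw [Fin.sum_univ_castSucc]
    congr 1
    · refine Finset.sum_congr rfl (fun j _ => ?_)
      rw [snoc_comp_succAbove]
      by_cases h : (i₀ : ℕ) ≤ (j : ℕ)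
      · rw [if_pos (by simpa using h), if_pos h, Fin.succ_castSucc, Fin.snoc_castSucc,
          Fin.snoc_castSucc, ← Fin.snoc_update]
        simp
      · rw [if_neg (by simpa using h), if_neg h]
    · rw [if_pos (by simpa using i₀.is_le), snoc_comp_succAbove, Fin.succ_last,
        Fin.snoc_last, Fin.snoc_castSucc, Fin.update_snoc_last]
      simp
  rw [Finset.sum_congr rfl (fun i₀ _ => hmain i₀), Finset.sum_add_distrib,
    Fin.sum_univ_castSucc (f := fun i₀ : Fin (m+1) => ((-1:ℤ)^((i₀:ℕ)+1)) •
      f (Fin.snoc (fun k => y (i₀.succAbove k)) (br (y i₀) z)))]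
  simp only [Fin.succAbove_last, Fin.coe_castSucc, Fin.val_last]


theorem star_b (LH : g → (g →+ V) → (g →+ V)) (RH : (g →+ V) → g → (g →+ V))
    (hLH : ∀ a α w, LH a α w = l a (α w) - α (br a w))
    (hRH : ∀ α a w, RH α a w = α (br a w) - l a (α w) - r (α a) w)
    (F : (Fin m → g) → (g →+ V))
    (hF : ∀ u w, F u w = f (Fin.snoc u w)) :
    lpCoboundary br LH RH m F y z = lpCoboundary br l r (m+1) f (Fin.snoc y z) := by
  have epow : ∀ k : ℕ, ((-1:ℤ))^(k+1) = -((-1:ℤ)^k) := fun k => by ring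
  have lhs : lpCoboundary br LH RH m F y z
      = (∑ i : Fin m, ((-1:ℤ)^(i:ℕ)) •
            (l (y i.castSucc) (f (Fin.snoc (fun k => y (i.castSucc.succAbove k)) z))
              - f (Fin.snoc (fun k => y (i.castSucc.succAbove k)) (br (y i.castSucc) z))))
        + ((-1:ℤ)^(m+1)) •
            (f (Fin.snoc (fun k => y k.castSucc) (br (y (Fin.last m)) z))
              - l (y (Fin.last m)) (f (Fin.snoc (fun k => y k.castSucc) z))
              - r (f y) z)
        + ∑ i : Fin (m+1), ∑ j : Fin m,
            (if (i:ℕ) ≤ (j:ℕ) then ((-1:ℤ)^((i:ℕ)+1)) •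
              f (Fin.snoc (Function.update (fun k => y (i.succAbove k)) j
                (br (y i) (y j.succ))) z) else 0) := by
    show evalAt z (lpCoboundary br LH RH m F y) = _
    simp only [lpCoboundary]
    simp only [map_add, map_sum, map_zsmul, apply_ite (⇑(evalAt (g := g) (V := V) z)),
      map_zero]
    simp only [evalAt, AddMonoidHom.coe_mk, ZeroHom.coe_mk]
    simp only [hLH, hRH, hF]
    rw [snoc_cast_self]
  rw [lhs]
  conv_rhs => rw [lpCoboundary]
  rw [e1 l f y z, e2 r f y z, e3 br f y z]
  simp only [smul_sub, epow, neg_zsmul, Finset.sum_sub_distrib, Finset.sum_neg_distrib,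
    neg_sub, sub_neg_eq_add]
  abel

end Star


section Hom

variable (br : g → g → g) (l : g → V → V) (r : V → g → V)

/-- slot additivity -/
def SlotAdd {n : ℕ} (f : (Fin n → g) → V) : Prop :=
  ∀ (x : Fin n → g) (i : Fin n) (u v : g),
    f (Function.update x i (u + v)) = f (Function.update x i u) + f (Function.update x i v)

def LH (hbr2 : ∀ a b c, br a (b+c) = br a b + br a c)
    (hl2 : ∀ a u v, l a (u+v) = l a u + l a v) : g → (g →+ V) → (g →+ V) :=
  fun a α => AddMonoidHom.mk' (fun w => l a (α w) - α (br a w)) (by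
    intro u v
    rw [hbr2, map_add, map_add, hl2]
    abel)

def RH (hbr2 : ∀ a b c, br a (b+c) = br a b + br a c)
    (hl2 : ∀ a u v, l a (u+v) = l a u + l a v)
    (hr2 : ∀ u a b, r u (a+b) = r u a + r u b) : (g →+ V) → g → (g →+ V) :=
  fun α a => AddMonoidHom.mk' (fun w => α (br a w) - l a (α w) - r (α a) w) (by
    intro u v
    rw [hbr2, map_add, map_add, hl2, hr2]
    abel)

variable (hbr2 : ∀ a b c, br a (b+c) = br a b + br a c)
    (hbr1 : ∀ a b c, br (a+b) c = br a c + br b c)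
    (hl1 : ∀ a b u, l (a+b) u = l a u + l b u)
    (hl2 : ∀ a u v, l a (u+v) = l a u + l a v)
    (hr1 : ∀ u v a, r (u+v) a = r u a + r v a)
    (hr2 : ∀ u a b, r u (a+b) = r u a + r u b)

@[simp] lemma LH_apply (a : g) (α : g →+ V) (w : g) :
    LH br l hbr2 hl2 a α w = l a (α w) - α (br a w) := rfl

@[simp] lemma RH_apply (α : g →+ V) (a : g) (w : g) :
    RH br l r hbr2 hl2 hr2 α a w = α (br a w) - l a (α w) - r (α a) w := rfl

include hbr1 hl1 in
lemma LH_add1 (a b : g) (α : g →+ V) :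
    LH br l hbr2 hl2 (a+b) α = LH br l hbr2 hl2 a α + LH br l hbr2 hl2 b α := by
  ext w
  simp only [LH_apply, AddMonoidHom.add_apply, hl1, hbr1, map_add]
  abel

lemma LH_add2 (a : g) (α β : g →+ V) :
    LH br l hbr2 hl2 a (α + β) = LH br l hbr2 hl2 a α + LH br l hbr2 hl2 a β := by
  ext w
  simp only [LH_apply, AddMonoidHom.add_apply, hl2]
  abel

include hr1 in
lemma RH_add1 (α β : g →+ V) (a : g) :
    RH br l r hbr2 hl2 hr2 (α + β) a
      = RH br l r hbr2 hl2 hr2 α a + RH br l r hbr2 hl2 hr2 β a := by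
  ext w
  simp only [RH_apply, AddMonoidHom.add_apply, hl2, hr1]
  abel

include hbr1 hl1 hr1 in
lemma RH_add2 (α : g →+ V) (a b : g) :
    RH br l r hbr2 hl2 hr2 α (a+b)
      = RH br l r hbr2 hl2 hr2 α a + RH br l r hbr2 hl2 hr2 α b := by
  ext w
  simp only [RH_apply, AddMonoidHom.add_apply, hl1, hbr1, hr1, map_add]
  abel

include hr1 in
lemma repH (hleib : IsLeibnizBracket br) (hrep : IsLeibnizRep br l r) :
    IsLeibnizRep br (LH br l hbr2 hl2) (RH br l r hbr2 hl2 hr2) := by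
  obtain ⟨h1, h2, h3⟩ := hrep
  have lsub : ∀ a (u v : V), l a (u - v) = l a u - l a v :=
    fun a u v => (AddMonoidHom.mk' (l a) (hl2 a)).map_sub u v
  have rsub : ∀ (u v : V) (a : g), r (u - v) a = r u a - r v a :=
    fun u v a => (AddMonoidHom.mk' (fun t => r t a) (fun p q => hr1 p q a)).map_sub u v
  refine ⟨fun x y α => ?_, fun x y α => ?_, fun x y α => ?_⟩ <;> ext w
  · simp only [LH_apply, AddMonoidHom.add_apply, lsub]
    rw [h1 x y (α w), hleib x y w, map_add]
    abel
  · simp only [LH_apply, RH_apply, AddMonoidHom.add_apply, lsub, rsub]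
    rw [h1 x y (α w), h2 x w (α y), hleib x y w, map_add]
    abel
  · simp only [LH_apply, RH_apply, AddMonoidHom.add_apply, lsub, rsub]
    rw [h1 x y (α w), h2 x w (α y), h3 y w (α x), hleib x y w, map_add]
    abel

def Phi {n : ℕ} (f : (Fin (n+1) → g) → V) (hf : SlotAdd f) :
    (Fin n → g) → (g →+ V) :=
  fun u => AddMonoidHom.mk' (fun w => f (Fin.snoc u w)) (by
    intro w w'
    have h1 : ∀ w0 : g, Fin.snoc (α := fun _ => g) u w0
        = Function.update (Fin.snoc (α := fun _ => g) u 0) (Fin.last n) w0 :=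
      fun w0 => by rw [Fin.update_snoc_last]
    rw [h1 (w + w'), h1 w, h1 w', hf])

@[simp] lemma Phi_apply {n : ℕ} (f : (Fin (n+1) → g) → V) (hf : SlotAdd f)
    (u : Fin n → g) (w : g) : Phi f hf u w = f (Fin.snoc u w) := rfl

lemma Phi_slotAdd {n : ℕ} (f : (Fin (n+1) → g) → V) (hf : SlotAdd f) :
    SlotAdd (Phi f hf) := by
  intro x i u v
  ext w
  simp only [Phi_apply, AddMonoidHom.add_apply, Fin.snoc_update]
  exact hf _ _ _ _

end Hom

section Base

variable (br : g → g → g) (l : g → V → V) (r : V → g → V)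

lemma base (hl2 : ∀ a u v, l a (u+v) = l a u + l a v)
    (hr1 : ∀ u v a, r (u+v) a = r u a + r v a)
    (h3 : ∀ x y u, r u (br x y) = r (r u x) y + l x (r u y))
    (f : (Fin 0 → g) → V) (x : Fin 2 → g) :
    lpCoboundary br l r 1 (lpCoboundary br l r 0 f) x = 0 := by
  have lneg : ∀ a (u : V), l a (-u) = -(l a u) :=
    fun a u => (AddMonoidHom.mk' (l a) (hl2 a)).map_neg u
  have rneg : ∀ (u : V) (a : g), r (-u) a = -(r u a) :=
    fun u a => (AddMonoidHom.mk' (fun t => r t a) (fun p q => hr1 p q a)).map_neg u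
  obtain ⟨c, hc⟩ : ∃ c, ∀ t : Fin 0 → g, f t = c :=
    ⟨f (fun k => k.elim0), fun t => congrArg f (funext fun k => k.elim0)⟩
  have h0 : ∀ w : Fin 1 → g, lpCoboundary br l r 0 f w = -(r c (w 0)) := by
    intro w
    simp [lpCoboundary, hc]
  simp only [lpCoboundary, h0, Fin.sum_univ_succ, lneg, rneg, hc, Finset.univ_eq_empty,
    Finset.sum_empty, Fin.sum_univ_zero, pow_zero, one_smul, pow_one, add_zero, zero_add,
    Fin.last_zero, Function.update_self, neg_zsmul, neg_neg]
  norm_num [show ((0:Fin 2).succAbove 0) = 1 from rfl, show ((0:Fin 1).succ : Fin 2) = 1 from rfl,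
    Fin.last_zero, Function.update_self]
  rw [show (Fin.last 1 : Fin 2) = 1 from rfl, h3 (x 0) (x 1) c]
  abel

end Base

section Engine

theorem engine {G : Type u} [AddCommGroup G] (br : G → G → G)
    (hbr1 : ∀ a b c, br (a+b) c = br a c + br b c)
    (hbr2 : ∀ a b c, br a (b+c) = br a b + br a c)
    (hleib : IsLeibnizBracket br) :
    ∀ (n : ℕ) (V : Type (max u w)) (_ : AddCommGroup V)
      (l : G → V → V) (r : V → G → V),
      (∀ a b u, l (a+b) u = l a u + l b u) →
      (∀ a u v, l a (u+v) = l a u + l a v) →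
      (∀ u v a, r (u+v) a = r u a + r v a) →
      (∀ u a b, r u (a+b) = r u a + r u b) →
      IsLeibnizRep br l r →
      ∀ (f : (Fin n → G) → V), SlotAdd f →
      ∀ (x : Fin (n+2) → G),
      lpCoboundary br l r (n+1) (lpCoboundary br l r n f) x = 0 := by
  intro n
  induction n with
  | zero =>
      intro V _ l r hl1 hl2 hr1 hr2 hrep f hf x
      exact base br l r hl2 hr1 hrep.2.2 f x
  | succ n IH =>
      intro V instV l r hl1 hl2 hr1 hr2 hrep f hf x
      obtain ⟨y, z, rfl⟩ : ∃ y z, x = Fin.snoc y z :=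
        ⟨Fin.init x, x (Fin.last _), (Fin.snoc_init_self x).symm⟩
      have hstar1 : ∀ (u : Fin (n+1) → G) (t : G),
          lpCoboundary br (LH br l hbr2 hl2) (RH br l r hbr2 hl2 hr2) n (Phi f hf) u t
            = lpCoboundary br l r (n+1) f (Fin.snoc u t) :=
        fun u t => Star.star_b br l r f u t _ _ (fun _ _ _ => rfl) (fun _ _ _ => rfl) _
          (fun _ _ => rfl)
      have hstar2 := Star.star_b br l r (lpCoboundary br l r (n+1) f) y z
        (LH br l hbr2 hl2) (RH br l r hbr2 hl2 hr2) (fun _ _ _ => rfl) (fun _ _ _ => rfl)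
        (lpCoboundary br (LH br l hbr2 hl2) (RH br l r hbr2 hl2 hr2) n (Phi f hf)) hstar1
      rw [← hstar2]
      have h0 := IH (G →+ V) inferInstance (LH br l hbr2 hl2) (RH br l r hbr2 hl2 hr2)
        (LH_add1 br l hbr2 hbr1 hl1 hl2)
        (LH_add2 br l hbr2 hl2)
        (RH_add1 br l r hbr2 hl2 hr1 hr2)
        (RH_add2 br l r hbr2 hbr1 hl1 hl2 hr1 hr2)
        (repH br l r hbr2 hl2 hr1 hr2 hleib hrep)
        (Phi f hf) (Phi_slotAdd f hf) y
      rw [h0]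
      rfl

end Engine

section Induced

variable (br : g → g → g) (T : g → g) (l : g → V → V) (r : V → g → V) (TV : V → V)
variable (hb1 : ∀ a b c, br (a+b) c = br a c + br b c)
variable (hb2 : ∀ a b c, br a (b+c) = br a b + br a c)
variable (hTadd : ∀ a b, T (a+b) = T a + T b)
variable (hRB : ∀ x y, br (T x) (T y) = T (br (T x) y + br x (T y)))
variable (hleib : IsLeibnizBracket br)
variable (hl1 : ∀ a b u, l (a+b) u = l a u + l b u)
variable (hl2 : ∀ a u v, l a (u+v) = l a u + l a v)
variable (hr1 : ∀ u v a, r (u+v) a = r u a + r v a)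
variable (hr2 : ∀ u a b, r u (a+b) = r u a + r u b)
variable (hTVadd : ∀ u v, TV (u+v) = TV u + TV v)
variable (hc1 : ∀ x u, l (T x) (TV u) = TV (l (T x) u + l x (TV u)))
variable (hc2 : ∀ x u, r (TV u) (T x) = TV (r (TV u) x + r u (T x)))
variable (hrepL : IsLeibnizRep br l r)

include hTadd hRB in
lemma hTbs : ∀ x y, T (br x (T y) + br (T x) y) = br (T x) (T y) := by
  intro x y
  rw [hTadd, hRB x y, hTadd]
  abel

include hb1 hb2 hTadd hRB hleib in
lemma inducedLeib : IsLeibnizBracket (fun a b => br a (T b) + br (T a) b) := by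
  intro x y z
  dsimp only
  rw [hTbs br T hTadd hRB y z, hTbs br T hTadd hRB x y, hTbs br T hTadd hRB x z]
  simp only [hb1, hb2]
  rw [hleib x (T y) (T z), hleib (T x) y (T z), hleib (T x) (T y) z]
  abel

include hb1 hb2 hTadd hRB hl1 hl2 hr1 hr2 hTVadd hc1 hc2 hrepL in
lemma inducedRep : IsLeibnizRep (fun a b => br a (T b) + br (T a) b)
    (fun a u => l (T a) u - TV (l a u)) (fun u a => r u (T a) - TV (r u a)) := by
  obtain ⟨h1, h2, h3⟩ := hrepL
  have lsub : ∀ a (u v : V), l a (u - v) = l a u - l a v :=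
    fun a u v => (AddMonoidHom.mk' (l a) (hl2 a)).map_sub u v
  have rsub : ∀ (u v : V) (a : g), r (u - v) a = r u a - r v a :=
    fun u v a => (AddMonoidHom.mk' (fun t => r t a) (fun p q => hr1 p q a)).map_sub u v
  have TVsub : ∀ (u v : V), TV (u - v) = TV u - TV v :=
    fun u v => (AddMonoidHom.mk' TV hTVadd).map_sub u v
  refine ⟨fun x y u => ?_, fun x y u => ?_, fun x y u => ?_⟩ <;> dsimp only
  · rw [hTbs br T hTadd hRB x y]
    simp only [lsub, TVsub]
    rw [hc1 x (l y u), hc1 y (l x u)]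
    simp only [hTVadd, hl1]
    rw [h1 (T x) (T y) u, h1 (T x) y u, h1 x (T y) u]
    simp only [hTVadd]
    abel
  · rw [hTbs br T hTadd hRB x y]
    simp only [lsub, rsub, TVsub]
    rw [hc1 x (r u y), hc2 y (l x u)]
    simp only [hTVadd, hr2]
    rw [h2 (T x) (T y) u, h2 (T x) y u, h2 x (T y) u]
    simp only [hTVadd]
    abel
  · rw [hTbs br T hTadd hRB x y]
    simp only [lsub, rsub, TVsub]
    rw [hc2 y (r u x), hc1 x (r u y)]
    simp only [hTVadd, hr2]
    rw [h3 (T x) (T y) u, h3 (T x) y u, h3 x (T y) u]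
    simp only [hTVadd]
    abel

end Induced

lemma lp_equiv {W : Type*} [AddCommGroup W] (e : V ≃+ W) (br : g → g → g)
    (l : g → V → V) (r : V → g → V) (n : ℕ) (f : (Fin n → g) → V) (x : Fin (n+1) → g) :
    lpCoboundary br (fun a u => e (l a (e.symm u))) (fun u a => e (r (e.symm u) a)) n
      (fun t => e (f t)) x = e (lpCoboundary br l r n f x) := by
  simp only [lpCoboundary, map_add, map_sum, map_zsmul, apply_ite (⇑e), map_zero,
    AddEquiv.symm_apply_apply]

theorem main.{u2, v2} {G : Type u2} [AddCommGroup G] {W : Type v2} [AddCommGroup W]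
    (br : G → G → G)
    (hb1 : ∀ a b c, br (a+b) c = br a c + br b c)
    (hb2 : ∀ a b c, br a (b+c) = br a b + br a c)
    (hleib : IsLeibnizBracket br)
    (l : G → W → W) (r : W → G → W)
    (hl1 : ∀ a b u, l (a+b) u = l a u + l b u)
    (hl2 : ∀ a u v, l a (u+v) = l a u + l a v)
    (hr1 : ∀ u v a, r (u+v) a = r u a + r v a)
    (hr2 : ∀ u a b, r u (a+b) = r u a + r u b)
    (hrep : IsLeibnizRep br l r)
    (n : ℕ) (f : (Fin n → G) → W) (hf : SlotAdd f) (x : Fin (n+2) → G) :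
    lpCoboundary br l r (n+1) (lpCoboundary br l r n f) x = 0 := by
  have e : W ≃+ ULift.{u2} W := AddEquiv.ulift.symm
  have h := engine.{u2, v2} br hb1 hb2 hleib n (ULift.{u2} W) inferInstance
    (fun a u => e (l a (e.symm u))) (fun u a => e (r (e.symm u) a))
    (fun a b u => by rw [hl1, map_add])
    (fun a u v => by rw [map_add, hl2, map_add])
    (fun u v a => by rw [map_add, hr1, map_add])
    (fun u a b => by rw [hr2, map_add])
    (by
      obtain ⟨h1, h2, h3⟩ := hrep
      refine ⟨fun a b u => ?_, fun a b u => ?_, fun a b u => ?_⟩ <;>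
        simp only [AddEquiv.symm_apply_apply, ← map_add] <;>
        exact congrArg e (by first
          | exact h1 a b (e.symm u)
          | exact h2 a b (e.symm u)
          | exact h3 a b (e.symm u)))
    (fun t => e (f t))
    (fun t i u v => by dsimp only; rw [hf, map_add])
    x
  rw [funext (fun t => lp_equiv e br l r n f t)] at h
  rw [lp_equiv e br l r (n+1) (lpCoboundary br l r n f) x] at h
  exact e.injective (by simpa using h)

end LP

/-- The Loday–Pirashvili coboundary `∂` of the induced Leibniz algebra
`(g, [.,.]_*)` with coefficients in the induced representation `(V, l', r')`
squares to zero: `∂^{n+1} ∘ ∂^n = 0`. -/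
theorem induced_coboundary_squares_to_zero {K : Type*} [Field K]
    {g : Type*} [AddCommGroup g] [Module K g]
    {V : Type*} [AddCommGroup V] [Module K V]
    (br : g → g → g) (hbil : Bilin K br) (hleib : IsLeibnizBracket br)
    (T : g → g) (hT : IsLinearMap K T)
    (hRB : ∀ x y, br (T x) (T y) = T (br (T x) y + br x (T y)))
    (l : g → V → V) (r : V → g → V) (TV : V → V)
    (hl : Bilin K l) (hr : Bilin K r) (hTV : IsLinearMap K TV)
    (hrep : IsRBRep br T l r TV) :
    ∀ (n : ℕ) (f : MultilinearMap K (fun _ : Fin n => g) V)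
      (x : Fin (n + 2) → g),
      lpCoboundary (fun a b => br a (T b) + br (T a) b)
          (fun a u => l (T a) u - TV (l a u))
          (fun u a => r u (T a) - TV (r u a)) (n + 1)
          (lpCoboundary (fun a b => br a (T b) + br (T a) b)
            (fun a u => l (T a) u - TV (l a u))
            (fun u a => r u (T a) - TV (r u a)) n ⇑f) x = 0 := by
  intro n f x
  have hb1 := hbil.1
  have hb2 := hbil.2.2.1
  have hl1 := hl.1
  have hl2 := hl.2.2.1
  have hr1 := hr.1
  have hr2 := hr.2.2.1
  have hTadd := hT.map_add
  have hTVadd := hTV.map_add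
  obtain ⟨hrepL, hc1, hc2⟩ := hrep
  refine LP.main (fun a b => br a (T b) + br (T a) b)
    (fun a b c => by rw [hb1, hTadd, hb1]; abel)
    (fun a b c => by rw [hTadd, hb2, hb2]; abel)
    (LP.inducedLeib br T hb1 hb2 hTadd hRB hleib)
    (fun a u => l (T a) u - TV (l a u)) (fun u a => r u (T a) - TV (r u a))
    (fun a b u => by rw [hTadd, hl1, hl1, hTVadd]; abel)
    (fun a u v => by rw [hl2, hl2, hTVadd]; abel)
    (fun u v a => by rw [hr1, hr1, hTVadd]; abel)
    (fun u a b => by rw [hTadd, hr2, hr2, hTVadd]; abel)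
    (LP.inducedRep br T l r TV hb1 hb2 hTadd hRB hl1 hl2 hr1 hr2 hTVadd hc1 hc2 hrepL)
    n ⇑f (fun t i u v => f.map_update_add t i u v) x
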